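/- The expansion of exp(t(X_0 + (1/2)Σ_{i=1}^d X_i²)) in ℝ[[X_0,...,X_d]] equals 1 + Σ_{k=1}^∞ Σ_{I ∈ ℐ_k} (t^{(k+n(I))/2} / (2^{(k-n(I))/2} · ((k+n(I))/2)!)) X_{i_1}⋯X_{i_k}, where ℐ_k is the set of words of length k obtained by concatenating blocks {0} and {(i,i)}, i ∈ {1,...,d}, and n(I) is the number of 0's in I. -/

import Mathlib

/-- Non-commutative formal power series `ℝ[[X₀,…,X_d]]`, by coefficients on words. -/
def NCSeries (d : ℕ) : Type := List (Fin (d + 1)) → ℝ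

/-- The unit `1` of `ℝ[[X₀,…,X_d]]`. -/
noncomputable def NCSeries.one {d : ℕ} : NCSeries d := fun w => if w = [] then 1 else 0

/-- The product in `ℝ[[X₀,…,X_d]]`. -/
noncomputable def NCSeries.mul {d : ℕ} (a b : NCSeries d) : NCSeries d := fun w =>
  ∑ k ∈ Finset.range (w.length + 1), a (w.take k) * b (w.drop k)

/-- Powers in `ℝ[[X₀,…,X_d]]`. -/
noncomputable def NCSeries.pow {d : ℕ} (a : NCSeries d) : ℕ → NCSeries d
  | 0 => NCSeries.one
  | k + 1 => NCSeries.mul a (NCSeries.pow a k)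

/-- `exp Y = Σ_{k ≥ 0} Y^k / k!` in `ℝ[[X₀,…,X_d]]` (finite sum on each coefficient for
`Y` with zero constant term). -/
noncomputable def NCSeries.exp {d : ℕ} (a : NCSeries d) : NCSeries d := fun w =>
  ∑ k ∈ Finset.range (w.length + 1), NCSeries.pow a k w / (Nat.factorial k : ℝ)

/-- The element `t (X₀ + (1/2) Σ_{i=1}^d Xᵢ²)` of `ℝ[[X₀,…,X_d]]`. -/
noncomputable def generatorElt {d : ℕ} (t : ℝ) : NCSeries d := fun w =>
  match w with
  | [i] => if i = 0 then t else 0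
  | [i, j] => if i = j ∧ i ≠ 0 then t / 2 else 0
  | _ => 0

/-- `ℐ`: the words obtained by all possible concatenations of the blocks `{0}` and
`{(i,i)}`, `i ∈ {1,…,d}`. -/
inductive BlockWord {d : ℕ} : List (Fin (d + 1)) → Prop
  | nil : BlockWord []
  | zero (w : List (Fin (d + 1))) : BlockWord w → BlockWord (0 :: w)
  | pair (i : Fin (d + 1)) (w : List (Fin (d + 1))) : i ≠ 0 → BlockWord w →
      BlockWord (i :: i :: w)

section Aux
variable {d : ℕ} {t : ℝ}

@[simp] lemma gen_nil : generatorElt (d := d) t [] = 0 := rfl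
@[simp] lemma gen_single (i : Fin (d+1)) :
    generatorElt (d := d) t [i] = if i = 0 then t else 0 := rfl
@[simp] lemma gen_pair (i j : Fin (d+1)) :
    generatorElt (d := d) t [i, j] = if i = j ∧ i ≠ 0 then t / 2 else 0 := rfl
@[simp] lemma gen_long (i j k : Fin (d+1)) (rest : List (Fin (d+1))) :
    generatorElt (d := d) t (i :: j :: k :: rest) = 0 := rfl

@[simp] lemma gen_zero_cons (x : Fin (d+1)) (rest : List (Fin (d+1))) :
    generatorElt (d := d) t (0 :: x :: rest) = 0 := by
  cases rest <;> simp

lemma mul_nil (b : NCSeries d) : NCSeries.mul (generatorElt t) b [] = 0 := by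
  simp [NCSeries.mul]

lemma mul_cons_zero (b : NCSeries d) (w : List (Fin (d+1))) :
    NCSeries.mul (generatorElt t) b (0 :: w) = t * b w := by
  unfold NCSeries.mul
  rw [Finset.sum_eq_single_of_mem 1 (by simp)]
  · simp
  · intro j hj hne
    match j with
    | 0 => simp
    | 1 => exact absurd rfl hne
    | (n+2) =>
      simp only [Finset.mem_range, List.length_cons] at hj
      cases w with
      | nil => simp at hj
      | cons x w' => simp [List.take]

lemma mul_single (b : NCSeries d) {i : Fin (d+1)} (hi : i ≠ 0) :
    NCSeries.mul (generatorElt t) b [i] = 0 := by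
  simp [NCSeries.mul, Finset.sum_range_succ, hi]

lemma mul_cons_ne (b : NCSeries d) {i : Fin (d+1)} (hi : i ≠ 0) (x : Fin (d+1))
    (w : List (Fin (d+1))) :
    NCSeries.mul (generatorElt t) b (i :: x :: w) =
      (if x = i then t / 2 else 0) * b w := by
  unfold NCSeries.mul
  rw [Finset.sum_eq_single_of_mem 2 (by simp)]
  · simp only [List.take, List.drop, gen_pair]
    congr 1
    by_cases hx : x = i
    · simp [hx, hi]
    · have hxi : ¬ i = x := fun h => hx h.symm
      simp [hx, hxi]
  · intro j hj hne
    match j with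
    | 0 => simp
    | 1 => simp [hi]
    | 2 => exact absurd rfl hne
    | (n+3) =>
      simp only [Finset.mem_range, List.length_cons] at hj
      cases w with
      | nil => simp at hj
      | cons y w' => simp [List.take]

lemma bw_zero_iff (w : List (Fin (d+1))) : BlockWord (0 :: w) ↔ BlockWord w := by
  constructor
  · intro h
    cases h with
    | zero _ h => exact h
    | pair i _ hi h => exact absurd rfl hi
  · exact BlockWord.zero w

lemma not_bw_single {i : Fin (d+1)} (hi : i ≠ 0) : ¬ BlockWord [i] := by
  intro h
  cases h with
  | zero _ _ => exact hi rfl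

lemma bw_pair_elim {i x : Fin (d+1)} {w : List (Fin (d+1))} (hi : i ≠ 0)
    (h : BlockWord (i :: x :: w)) : x = i ∧ BlockWord w := by
  cases h with
  | zero _ _ => exact absurd rfl hi
  | pair j w' hj hw => exact ⟨rfl, hw⟩

lemma bw_min {w : List (Fin (d+1))} (h : BlockWord w) (hne : w ≠ []) :
    2 ≤ w.length + w.count 0 := by
  cases h with
  | nil => exact absurd rfl hne
  | zero w' _ => simp [List.count_cons]; omega
  | pair i w' hi _ => simp; omega

open Classical in
lemma pow_eval (t : ℝ) (k : ℕ) : ∀ w : List (Fin (d+1)),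
    NCSeries.pow (generatorElt t) k w =
      if BlockWord w ∧ k = (w.length + w.count 0) / 2 then
        t ^ k / 2 ^ ((w.length - w.count 0) / 2)
      else 0 := by
  classical
  induction k with
  | zero =>
    intro w
    cases w with
    | nil => simp [NCSeries.pow, NCSeries.one, BlockWord.nil]
    | cons a w' =>
      rw [if_neg, ]
      · simp [NCSeries.pow, NCSeries.one]
      · rintro ⟨hbw, hk⟩
        have := bw_min hbw (by simp)
        omega
  | succ k IH =>
    intro w
    show NCSeries.mul (generatorElt t) (NCSeries.pow (generatorElt t) k) w = _
    cases w with
    | nil => simp [mul_nil]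
    | cons i w' =>
      by_cases hi : i = 0
      · subst hi
        rw [mul_cons_zero, IH w']
        have hlen : (0 :: w').count 0 = w'.count 0 + 1 := by simp
        by_cases hP : BlockWord w' ∧ k = (w'.length + w'.count 0) / 2
        · rw [if_pos hP, if_pos ⟨(bw_zero_iff w').mpr hP.1, by simp [hlen]; omega⟩]
          have hq : ((0 :: w').length - (0 :: w').count 0) / 2
              = (w'.length - w'.count 0) / 2 := by simp [hlen]
          rw [hq, pow_succ]
          ring
        · rw [if_neg hP, if_neg, mul_zero]
          rintro ⟨hbw, hk⟩
          exact hP ⟨(bw_zero_iff w').mp hbw, by simp [hlen] at hk; omega⟩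
      · cases w' with
        | nil =>
          rw [mul_single _ hi, if_neg]
          rintro ⟨hbw, _⟩
          exact not_bw_single hi hbw
        | cons x w'' =>
          rw [mul_cons_ne _ hi]
          by_cases hx : x = i
          · subst hx
            rw [if_pos rfl, IH w'']
            have hc : (x :: x :: w'').count 0 = w''.count 0 := by
              rw [List.count_cons_of_ne hi, List.count_cons_of_ne hi]
            have hcl : w''.count 0 ≤ w''.length := List.count_le_length
            by_cases hP : BlockWord w'' ∧ k = (w''.length + w''.count 0) / 2
            · rw [if_pos hP, if_pos ⟨BlockWord.pair x w'' hi hP.1, by simp [hc]; omega⟩]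
              have hq : ((x :: x :: w'').length - (x :: x :: w'').count 0) / 2
                  = (w''.length - w''.count 0) / 2 + 1 := by simp [hc]; omega
              rw [hq, pow_succ, pow_succ]
              ring
            · rw [if_neg hP, if_neg, mul_zero]
              rintro ⟨hbw, hk⟩
              exact hP ⟨(bw_pair_elim hi hbw).2, by simp [hc] at hk; omega⟩
          · rw [if_neg hx, zero_mul, if_neg]
            rintro ⟨hbw, _⟩
            exact hx (bw_pair_elim hi hbw).1

end Aux

/-- **Expansion of `exp(t(X₀ + ½ Σ Xᵢ²))`.** The coefficient of a word
`I = (i₁,…,i_k)` equals `t^{(k+n(I))/2} / (2^{(k-n(I))/2} ((k+n(I))/2)!)` if `I ∈ ℐ_k`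
(a concatenation of blocks `{0}` and `{(i,i)}`), and `0` otherwise; `n(I)` is the number
of `0`'s in `I`. -/
theorem exp_generator_coeff {d : ℕ} (t : ℝ) (w : List (Fin (d + 1))) :
    (BlockWord w →
      NCSeries.exp (generatorElt t) w =
        t ^ ((w.length + w.count 0) / 2) /
          (2 ^ ((w.length - w.count 0) / 2) *
            (Nat.factorial ((w.length + w.count 0) / 2) : ℝ))) ∧
    (¬ BlockWord w → NCSeries.exp (generatorElt t) w = 0) := by
  classical
  constructor
  · intro hbw
    have hc : w.count 0 ≤ w.length := List.count_le_length
    show ∑ k ∈ Finset.range (w.length + 1),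
        NCSeries.pow (generatorElt t) k w / (Nat.factorial k : ℝ) = _
    rw [Finset.sum_eq_single_of_mem ((w.length + w.count 0) / 2)
        (by simp; omega)]
    · rw [pow_eval, if_pos ⟨hbw, rfl⟩, div_div]
    · intro j _ hj
      rw [pow_eval, if_neg (fun h => hj h.2), zero_div]
  · intro hbw
    show ∑ k ∈ Finset.range (w.length + 1),
        NCSeries.pow (generatorElt t) k w / (Nat.factorial k : ℝ) = 0
    apply Finset.sum_eq_zero
    intro j _
    rw [pow_eval, if_neg (fun h => hbw h.1), zero_div]
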